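/- Let Ω ⊆ ℝⁿ be open and let 0 < λ₁ < λ₂ < 1. Then a function f : Ω → ℝˡ belongs to 1-AC_{λ₁} if and only if it belongs to 1-AC_{λ₂}; that is, the class 1-AC_λ is independent of λ ∈ (0,1). -/

import Mathlib

open MeasureTheory Metric Set Filter

noncomputable section

/-- The closed interval (box) `[a,b]` in `ℝⁿ`. -/
def box {n : ℕ} (a b : EuclideanSpace ℝ (Fin n)) : Set (EuclideanSpace ℝ (Fin n)) :=
  {x | ∀ ν, a ν ≤ x ν ∧ x ν ≤ b ν}

/-- `f ∈ 1-AC_λ` on `Ω`: for every `ε > 0` there is `δ > 0` such that for every finite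
collection of pairwise disjoint 1-regular intervals `[aᵢ,bᵢ] ⊆ Ω` (i.e. cubes, those with
`ℒⁿ([aᵢ,bᵢ]) ≥ (max_ν |aᵢ,ν − bᵢ,ν|)ⁿ`), `∑ ℒⁿ([aᵢ,bᵢ]) < δ` implies
`∑ |f(dᵢ) − f(cᵢ)|ⁿ < ε`, where `[cᵢ,dᵢ] = ^λ[aᵢ,bᵢ]` is the interval with the same
center `(aᵢ+bᵢ)/2` and side lengths `λ(bᵢ,ν − aᵢ,ν)`. -/
def OneACl {n l : ℕ} (lam : ℝ) (f : EuclideanSpace ℝ (Fin n) → EuclideanSpace ℝ (Fin l))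
    (Ω : Set (EuclideanSpace ℝ (Fin n))) : Prop :=
  ∀ ε > 0, ∃ δ > 0, ∀ (k : ℕ) (a b : Fin k → EuclideanSpace ℝ (Fin n)),
    (∀ i, ∀ ν, a i ν ≤ b i ν) →
    (∀ i, box (a i) (b i) ⊆ Ω) →
    (Pairwise fun i j => Disjoint (box (a i) (b i)) (box (a j) (b j))) →
    (∀ i, (⨆ ν, |a i ν - b i ν|) ^ n ≤ (volume (box (a i) (b i))).toReal) →
    ∑ i, (volume (box (a i) (b i))).toReal < δ →
    ∑ i, ‖f ((1/2 : ℝ) • (a i + b i) + (lam/2) • (b i - a i)) -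
          f ((1/2 : ℝ) • (a i + b i) - (lam/2) • (b i - a i))‖ ^ n < ε

lemma volume_box {n : ℕ} (a b : EuclideanSpace ℝ (Fin n)) (hab : ∀ ν, a ν ≤ b ν) :
    (volume (box a b)).toReal = ∏ ν, (b ν - a ν) := by
  have h1 : box a b = (MeasurableEquiv.toLp 2 (Fin n → ℝ)).symm ⁻¹'
      (Set.univ.pi fun ν => Icc (a ν) (b ν)) := by
    ext x; simp [box, Set.mem_pi, Icc]
  rw [h1, (EuclideanSpace.volume_preserving_symm_measurableEquiv_toLp (Fin n)).measure_preimage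
    ((MeasurableSet.univ_pi fun ν => measurableSet_Icc).nullMeasurableSet)]
  rw [volume_pi_pi]
  simp only [Real.volume_Icc]
  rw [ENNReal.toReal_prod]
  congr 1; ext ν; rw [ENNReal.toReal_ofReal (by linarith [hab ν])]

lemma pow_sum_le_aux {m n : ℕ} (hm : 1 ≤ m) (g : ℕ → ℝ) (hg : ∀ j, 0 ≤ g j) :
    (∑ j ∈ Finset.range m, g j) ^ n ≤ (m : ℝ) ^ n * ∑ j ∈ Finset.range m, g j ^ n := by
  cases n with
  | zero =>
    simp only [pow_zero, one_mul]
    rw [Finset.sum_const, Finset.card_range, nsmul_eq_mul, mul_one]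
    exact_mod_cast hm
  | succ p =>
    have h := pow_sum_div_card_le_sum_pow (s := Finset.range m) (f := g)
      (fun i _ => hg i) p
    rw [Finset.card_range] at h
    have hmp : (0:ℝ) < (m:ℝ) ^ p := by positivity
    rw [div_le_iff₀ hmp] at h
    calc (∑ j ∈ Finset.range m, g j) ^ (p+1)
        ≤ (∑ j ∈ Finset.range m, g j ^ (p+1)) * (m:ℝ) ^ p := h
      _ ≤ (m:ℝ) ^ (p+1) * ∑ j ∈ Finset.range m, g j ^ (p+1) := by
          rw [mul_comm]
          apply mul_le_mul_of_nonneg_right _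
            (Finset.sum_nonneg fun j _ => pow_nonneg (hg j) _)
          exact pow_le_pow_right₀ (by exact_mod_cast hm) (Nat.le_succ p)

/-- The point `center + c • (b - a)` of the box `[a,b]`. -/
def sb {n : ℕ} (c : ℝ) (a b : EuclideanSpace ℝ (Fin n)) : EuclideanSpace ℝ (Fin n) :=
  (1/2 : ℝ) • (a + b) + c • (b - a)

lemma sb_apply {n : ℕ} (c : ℝ) (a b : EuclideanSpace ℝ (Fin n)) (ν : Fin n) :
    sb c a b ν = (a ν + b ν)/2 + c * (b ν - a ν) := by
  simp [sb, PiLp.add_apply, PiLp.smul_apply, PiLp.sub_apply, smul_eq_mul]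
  ring

lemma sb_congr {n : ℕ} {c₁ c₂ : ℝ} (h : c₁ = c₂) (a b : EuclideanSpace ℝ (Fin n)) :
    sb c₁ a b = sb c₂ a b := by rw [h]

lemma sb_add {n : ℕ} (α β c : ℝ) (a b : EuclideanSpace ℝ (Fin n)) :
    (1/2 : ℝ) • (sb α a b + sb β a b) + c • (sb β a b - sb α a b)
      = sb ((α + β)/2 + c * (β - α)) a b := by
  simp only [sb]
  match_scalars <;> ring

lemma sb_sub {n : ℕ} (α β c : ℝ) (a b : EuclideanSpace ℝ (Fin n)) :
    (1/2 : ℝ) • (sb α a b + sb β a b) - c • (sb β a b - sb α a b)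
      = sb ((α + β)/2 - c * (β - α)) a b := by
  simp only [sb]
  match_scalars <;> ring

lemma sb_self_add {n : ℕ} (c : ℝ) (a b : EuclideanSpace ℝ (Fin n)) :
    (1/2 : ℝ) • (a + b) + c • (b - a) = sb c a b := rfl

lemma sb_self_sub {n : ℕ} (c : ℝ) (a b : EuclideanSpace ℝ (Fin n)) :
    (1/2 : ℝ) • (a + b) - c • (b - a) = sb (-c) a b := by
  simp only [sb, neg_smul, sub_eq_add_neg]


def alc (t M s : ℝ) (j : ℕ) : ℝ := t * (2*(j:ℝ) + 1 - M) / (2*M) - t / (2*M*s)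
def bec (t M s : ℝ) (j : ℕ) : ℝ := t * (2*(j:ℝ) + 1 - M) / (2*M) + t / (2*M*s)
def gac (t M : ℝ) (j : ℕ) : ℝ := t * (2*(j:ℝ) - M) / (2*M)

set_option maxHeartbeats 3000000 in
lemma oneACl_mono {n l : ℕ} {Ω : Set (EuclideanSpace ℝ (Fin n))}
    {f : EuclideanSpace ℝ (Fin n) → EuclideanSpace ℝ (Fin l)}
    {s t : ℝ} (hs0 : 0 < s) (hs1 : s < 1) (ht0 : 0 < t) (ht1 : t < 1)
    (H : OneACl s f Ω) : OneACl t f Ω := by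
  intro ε hε
  obtain ⟨m, hm1, hmkey⟩ : ∃ m : ℕ, 1 ≤ m ∧ t * (1 - s) ≤ (m : ℝ) * (s * (1 - t)) := by
    refine ⟨max 1 ⌈t * (1 - s) / (s * (1 - t))⌉₊, le_max_left _ _, ?_⟩
    have hst : 0 < s * (1 - t) := by nlinarith
    have h1 : t * (1 - s) / (s * (1 - t)) ≤ (⌈t * (1 - s) / (s * (1 - t))⌉₊ : ℝ) :=
      Nat.le_ceil _
    have h2 : ((⌈t * (1 - s) / (s * (1 - t))⌉₊ : ℕ) : ℝ)
        ≤ ((max 1 ⌈t * (1 - s) / (s * (1 - t))⌉₊ : ℕ) : ℝ) := by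
      exact_mod_cast le_max_right _ _
    rw [div_le_iff₀ hst] at h1
    calc t * (1 - s) ≤ (⌈t * (1 - s) / (s * (1 - t))⌉₊ : ℝ) * (s * (1 - t)) := h1
      _ ≤ _ := mul_le_mul_of_nonneg_right h2 hst.le
  obtain ⟨M, hMdef⟩ : ∃ x : ℝ, x = (m : ℝ) := ⟨_, rfl⟩
  rw [← hMdef] at hmkey
  have hM1 : 1 ≤ M := by rw [hMdef]; exact_mod_cast hm1
  have hM0 : 0 < M := by linarith
  have hMs : 0 < 2*M*s := by positivity
  have hts0 : 0 < t/(M*s) := by positivity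
  obtain ⟨ε', hε'def⟩ : ∃ x : ℝ, x = ε / (M ^ (n+1) + 1) := ⟨_, rfl⟩
  have hε'pos : 0 < ε' := by rw [hε'def]; positivity
  obtain ⟨δ', hδ'pos, Hδ'⟩ := H ε' hε'pos
  obtain ⟨C, hCdef⟩ : ∃ x : ℝ, x = (t / (M * s)) ^ n := ⟨_, rfl⟩
  have hC0 : 0 < C := by rw [hCdef]; positivity
  refine ⟨δ' / (C + 1), by positivity, ?_⟩
  intro k a b hab hsub hdisj hreg hvol
  have hba : ∀ j, bec t M s j - alc t M s j = t/(M*s) := by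
    intro j; unfold alc bec; field_simp; ring
  -- the key application of H for each step j of the chain
  have key : ∀ j ∈ Finset.range m,
      ∑ i, ‖f (sb (gac t M (j+1)) (a i) (b i)) - f (sb (gac t M j) (a i) (b i))‖ ^ n < ε' := by
    intro j hj
    have hjM : (j : ℝ) ≤ M - 1 := by
      rw [hMdef]
      have : (j:ℝ) + 1 ≤ (m:ℝ) := by exact_mod_cast Finset.mem_range.mp hj
      linarith
    have hj0 : (0:ℝ) ≤ (j:ℝ) := Nat.cast_nonneg j
    have hα : -(1/2) ≤ alc t M s j := by
      have heq : alc t M s j = (t * (2*(j:ℝ) + 1 - M) * s - t) / (2*M*s) := by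
        unfold alc; field_simp
      rw [heq, le_div_iff₀ hMs]
      nlinarith [mul_nonneg (mul_nonneg ht0.le hs0.le) hj0]
    have hβ : bec t M s j ≤ 1/2 := by
      have heq : bec t M s j = (t * (2*(j:ℝ) + 1 - M) * s + t) / (2*M*s) := by
        unfold bec; field_simp
      rw [heq, div_le_iff₀ hMs]
      nlinarith [mul_nonneg (mul_nonneg ht0.le hs0.le) (sub_nonneg.2 hjM)]
    have halbe : alc t M s j ≤ bec t M s j := by have := hba j; linarith [hts0]
    have h1 : ∀ i ν, sb (alc t M s j) (a i) (b i) ν ≤ sb (bec t M s j) (a i) (b i) ν := by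
      intro i ν
      rw [sb_apply, sb_apply]
      have hw : 0 ≤ b i ν - a i ν := by linarith [hab i ν]
      nlinarith [mul_le_mul_of_nonneg_right halbe hw]
    have hsubset : ∀ i, box (sb (alc t M s j) (a i) (b i)) (sb (bec t M s j) (a i) (b i))
        ⊆ box (a i) (b i) := by
      intro i x hx ν
      obtain ⟨hx1, hx2⟩ := hx ν
      have hw : 0 ≤ b i ν - a i ν := by linarith [hab i ν]
      refine ⟨le_trans ?_ hx1, le_trans hx2 ?_⟩
      · rw [sb_apply]
        nlinarith [mul_le_mul_of_nonneg_right hα hw]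
      · rw [sb_apply]
        nlinarith [mul_le_mul_of_nonneg_right hβ hw]
    have hdiffBA : ∀ i ν, sb (bec t M s j) (a i) (b i) ν - sb (alc t M s j) (a i) (b i) ν
        = (t/(M*s)) * (b i ν - a i ν) := by
      intro i ν
      rw [sb_apply, sb_apply]
      linear_combination (b i ν - a i ν) * hba j
    have hvol' : ∀ i, (volume (box (sb (alc t M s j) (a i) (b i)) (sb (bec t M s j) (a i) (b i)))).toReal
        = C * (volume (box (a i) (b i))).toReal := by
      intro i
      rw [volume_box _ _ (h1 i), volume_box _ _ (hab i), hCdef]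
      calc ∏ ν, (sb (bec t M s j) (a i) (b i) ν - sb (alc t M s j) (a i) (b i) ν)
          = ∏ ν, (t/(M*s)) * (b i ν - a i ν) :=
            Finset.prod_congr rfl fun ν _ => hdiffBA i ν
        _ = (t/(M*s)) ^ n * ∏ ν, (b i ν - a i ν) := by
            rw [Finset.prod_mul_distrib, Finset.prod_const, Finset.card_univ,
              Fintype.card_fin]
    have hsup : ∀ i, (⨆ ν, |sb (alc t M s j) (a i) (b i) ν - sb (bec t M s j) (a i) (b i) ν|)
        = (t/(M*s)) * ⨆ ν, |a i ν - b i ν| := by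
      intro i
      rw [Real.mul_iSup_of_nonneg hts0.le]
      congr 1; funext ν
      have h2 : sb (alc t M s j) (a i) (b i) ν - sb (bec t M s j) (a i) (b i) ν
          = (t/(M*s)) * (a i ν - b i ν) := by
        have := hdiffBA i ν; linarith
      rw [h2, abs_mul, abs_of_nonneg hts0.le]
    have hreg' : ∀ i, (⨆ ν, |sb (alc t M s j) (a i) (b i) ν - sb (bec t M s j) (a i) (b i) ν|) ^ n
        ≤ (volume (box (sb (alc t M s j) (a i) (b i)) (sb (bec t M s j) (a i) (b i)))).toReal := by
      intro i
      rw [hsup i, mul_pow, hvol' i, hCdef]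
      exact mul_le_mul_of_nonneg_left (hreg i) (by positivity)
    have hvolsum : ∑ i, (volume (box (sb (alc t M s j) (a i) (b i)) (sb (bec t M s j) (a i) (b i)))).toReal
        < δ' := by
      have e1 : ∑ i, (volume (box (sb (alc t M s j) (a i) (b i)) (sb (bec t M s j) (a i) (b i)))).toReal
          = C * ∑ i, (volume (box (a i) (b i))).toReal := by
        rw [Finset.mul_sum]
        exact Finset.sum_congr rfl fun i _ => hvol' i
      rw [e1]
      calc C * ∑ i, (volume (box (a i) (b i))).toReal
          < C * (δ' / (C + 1)) := by exact mul_lt_mul_of_pos_left hvol hC0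
        _ = (C/(C+1)) * δ' := by ring
        _ < 1 * δ' := mul_lt_mul_of_pos_right
              ((div_lt_one (by positivity)).mpr (by linarith)) hδ'pos
        _ = δ' := one_mul δ'
    have happ := Hδ' k (fun i => sb (alc t M s j) (a i) (b i)) (fun i => sb (bec t M s j) (a i) (b i))
      h1 (fun i => (hsubset i).trans (hsub i))
      (fun i i' hne => (hdisj hne).mono (hsubset i) (hsubset i'))
      hreg' hvolsum
    simp only [sb_add, sb_sub] at happ
    have e2 : (alc t M s j + bec t M s j)/2 + s/2 * (bec t M s j - alc t M s j) = gac t M (j+1) := by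
      unfold alc bec gac; push_cast; field_simp; ring
    have e3 : (alc t M s j + bec t M s j)/2 - s/2 * (bec t M s j - alc t M s j) = gac t M j := by
      unfold alc bec gac; field_simp; ring
    rw [e2, e3] at happ
    exact happ
  -- rewrite the goal via the telescoping chain
  have hgoal1 : ∀ i, (1/2 : ℝ) • (a i + b i) + (t/2) • (b i - a i) = sb (gac t M m) (a i) (b i) := by
    intro i
    rw [sb_self_add]
    refine sb_congr ?_ _ _
    unfold gac; rw [hMdef]; field_simp; ring
  have hgoal2 : ∀ i, (1/2 : ℝ) • (a i + b i) - (t/2) • (b i - a i) = sb (gac t M 0) (a i) (b i) := by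
    intro i
    rw [sb_self_sub]
    refine sb_congr ?_ _ _
    unfold gac; push_cast; field_simp; ring
  have htel : ∀ i, f (sb (gac t M m) (a i) (b i)) - f (sb (gac t M 0) (a i) (b i))
      = ∑ j ∈ Finset.range m, (f (sb (gac t M (j+1)) (a i) (b i)) - f (sb (gac t M j) (a i) (b i))) :=
    fun i => (Finset.sum_range_sub (fun j => f (sb (gac t M j) (a i) (b i))) m).symm
  have hstep : ∀ i, ‖f (sb (gac t M m) (a i) (b i)) - f (sb (gac t M 0) (a i) (b i))‖ ^ n
      ≤ M ^ n * ∑ j ∈ Finset.range m,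
          ‖f (sb (gac t M (j+1)) (a i) (b i)) - f (sb (gac t M j) (a i) (b i))‖ ^ n := by
    intro i
    rw [htel i]
    calc ‖∑ j ∈ Finset.range m, (f (sb (gac t M (j+1)) (a i) (b i)) - f (sb (gac t M j) (a i) (b i)))‖ ^ n
        ≤ (∑ j ∈ Finset.range m,
            ‖f (sb (gac t M (j+1)) (a i) (b i)) - f (sb (gac t M j) (a i) (b i))‖) ^ n :=
          pow_le_pow_left₀ (norm_nonneg _) (norm_sum_le _ _) n
      _ ≤ M ^ n * ∑ j ∈ Finset.range m,
            ‖f (sb (gac t M (j+1)) (a i) (b i)) - f (sb (gac t M j) (a i) (b i))‖ ^ n := by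
          rw [hMdef]
          exact pow_sum_le_aux hm1 _ fun j => norm_nonneg _
  calc ∑ i, ‖f ((1/2 : ℝ) • (a i + b i) + (t/2) • (b i - a i)) -
        f ((1/2 : ℝ) • (a i + b i) - (t/2) • (b i - a i))‖ ^ n
      = ∑ i, ‖f (sb (gac t M m) (a i) (b i)) - f (sb (gac t M 0) (a i) (b i))‖ ^ n := by
        exact Finset.sum_congr rfl fun i _ => by rw [hgoal1 i, hgoal2 i]
    _ ≤ ∑ i, M ^ n * ∑ j ∈ Finset.range m,
          ‖f (sb (gac t M (j+1)) (a i) (b i)) - f (sb (gac t M j) (a i) (b i))‖ ^ n :=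
        Finset.sum_le_sum fun i _ => hstep i
    _ = M ^ n * ∑ j ∈ Finset.range m,
          (∑ i, ‖f (sb (gac t M (j+1)) (a i) (b i)) - f (sb (gac t M j) (a i) (b i))‖ ^ n) := by
        rw [← Finset.mul_sum, Finset.sum_comm]
    _ < M ^ n * (M * ε') := by
        have hne : (Finset.range m).Nonempty := by
          rw [Finset.nonempty_range_iff]; omega
        have hlt := Finset.sum_lt_sum_of_nonempty hne key
        rw [Finset.sum_const, Finset.card_range, nsmul_eq_mul] at hlt
        rw [← hMdef] at hlt
        exact mul_lt_mul_of_pos_left hlt (by positivity)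
    _ = M ^ (n+1) * ε' := by ring
    _ < ε := by
        have hq : M ^ (n+1) / (M ^ (n+1) + 1) < 1 :=
          (div_lt_one (by positivity)).mpr (by linarith [pow_pos hM0 (n+1)])
        calc M ^ (n+1) * ε' = (M ^ (n+1) / (M ^ (n+1) + 1)) * ε := by
              rw [hε'def]; ring
          _ < 1 * ε := mul_lt_mul_of_pos_right hq hε
          _ = ε := one_mul ε

/-- For `0 < λ₁ < λ₂ < 1`, a function `f : Ω → ℝˡ` belongs to `1-AC_{λ₁}` if and only if it
belongs to `1-AC_{λ₂}`: the class `1-AC_λ` is independent of `λ ∈ (0,1)`. -/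
theorem oneACl_lambda_independent {n l : ℕ}
    (Ω : Set (EuclideanSpace ℝ (Fin n))) (hΩopen : IsOpen Ω)
    (lam₁ lam₂ : ℝ) (h₁ : 0 < lam₁) (h₁₂ : lam₁ < lam₂) (h₂ : lam₂ < 1)
    (f : EuclideanSpace ℝ (Fin n) → EuclideanSpace ℝ (Fin l)) :
    OneACl lam₁ f Ω ↔ OneACl lam₂ f Ω := by
  constructor
  · exact fun h => oneACl_mono h₁ (h₁₂.trans h₂) (h₁.trans h₁₂) h₂ h
  · exact fun h => oneACl_mono (h₁.trans h₁₂) h₂ h₁ (h₁₂.trans h₂) h
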